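/- Let a ∈ ℝ be nonzero, z ∈ ℝ^p, and D ∈ ℝ^{(q−1)×p} with q−1 ≤ p, and define the block matrix M := [[a, zᵀ],[0, D]] ∈ ℝ^{q×(p+1)}. Then the q-th largest singular value of M satisfies σ_q(M) ≥ min{|a|, σ_{q−1}(D)} / (1 + ‖z‖₂/|a|), where σ_j(·) denotes the j-th largest singular value. -/

import Mathlib

noncomputable section

/-- The smallest singular value of `N : Matrix α β ℝ` with `#α ≤ #β`, characterized as
`min_{‖u‖₂ = 1} ‖Nᵀu‖₂`; for a matrix with `q` rows and at least `q` columns this is the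
`q`-th largest singular value `σ_q(N)`. -/
def minSingularValue {α β : Type*} [Fintype α] [Fintype β] (N : Matrix α β ℝ) : ℝ :=
  sInf ((fun u : α → ℝ => Real.sqrt (∑ j, (∑ i, u i * N i j) ^ 2)) ''
    {u | ∑ i, (u i) ^ 2 = 1})

lemma minSV_nonneg {α β : Type*} [Fintype α] [Fintype β] (N : Matrix α β ℝ) :
    0 ≤ minSingularValue N := by
  apply Real.sInf_nonneg
  rintro x ⟨u, hu, rfl⟩
  exact Real.sqrt_nonneg _

lemma sqrt_triangle {ι : Type*} [Fintype ι] (x y : ι → ℝ) :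
    Real.sqrt (∑ j, (x j + y j) ^ 2) ≤
      Real.sqrt (∑ j, x j ^ 2) + Real.sqrt (∑ j, y j ^ 2) := by
  set X := Real.sqrt (∑ j, x j ^ 2) with hX
  set Y := Real.sqrt (∑ j, y j ^ 2) with hY
  have hX0 : 0 ≤ X := Real.sqrt_nonneg _
  have hY0 : 0 ≤ Y := Real.sqrt_nonneg _
  have hX2 : X ^ 2 = ∑ j, x j ^ 2 := Real.sq_sqrt (by positivity)
  have hY2 : Y ^ 2 = ∑ j, y j ^ 2 := Real.sq_sqrt (by positivity)
  have hcs : (∑ j, x j * y j) ^ 2 ≤ (X * Y) ^ 2 := by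
    rw [mul_pow, hX2, hY2]
    exact Finset.sum_mul_sq_le_sq_mul_sq Finset.univ x y
  have hxy : ∑ j, x j * y j ≤ X * Y := by
    calc ∑ j, x j * y j ≤ |∑ j, x j * y j| := le_abs_self _
      _ = Real.sqrt ((∑ j, x j * y j) ^ 2) := (Real.sqrt_sq_eq_abs _).symm
      _ ≤ Real.sqrt ((X * Y) ^ 2) := Real.sqrt_le_sqrt hcs
      _ = X * Y := Real.sqrt_sq (by positivity)
  have hsum : ∑ j, (x j + y j) ^ 2 = (∑ j, x j ^ 2) + 2 * (∑ j, x j * y j) + ∑ j, y j ^ 2 := by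
    rw [Finset.mul_sum, ← Finset.sum_add_distrib, ← Finset.sum_add_distrib]
    exact Finset.sum_congr rfl fun j _ => by ring
  have hexp : ∑ j, (x j + y j) ^ 2 ≤ (X + Y) ^ 2 := by rw [hsum]; nlinarith
  calc Real.sqrt (∑ j, (x j + y j) ^ 2) ≤ Real.sqrt ((X + Y) ^ 2) :=
        Real.sqrt_le_sqrt hexp
    _ = X + Y := Real.sqrt_sq (by positivity)

lemma minSV_le_apply {α β : Type*} [Fintype α] [Fintype β] (N : Matrix α β ℝ) (v : α → ℝ) :
    minSingularValue N * Real.sqrt (∑ i, v i ^ 2) ≤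
      Real.sqrt (∑ j, (∑ i, v i * N i j) ^ 2) := by
  rcases eq_or_lt_of_le (Real.sqrt_nonneg (∑ i, v i ^ 2)) with h0 | hpos
  · rw [← h0, mul_zero]; exact Real.sqrt_nonneg _
  · set n := Real.sqrt (∑ i, v i ^ 2) with hn
    have hn2 : n ^ 2 = ∑ i, v i ^ 2 := Real.sq_sqrt (by positivity)
    have hS : minSingularValue N ≤ Real.sqrt (∑ j, (∑ i, (v i / n) * N i j) ^ 2) := by
      apply csInf_le
      · exact ⟨0, by rintro x ⟨u, hu, rfl⟩; exact Real.sqrt_nonneg _⟩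
      · refine ⟨fun i => v i / n, ?_, rfl⟩
        simp only [Set.mem_setOf_eq, div_pow]
        rw [← Finset.sum_div, ← hn2, div_self (by positivity)]
    have h1 : ∀ j, ∑ i, (v i / n) * N i j = (∑ i, v i * N i j) / n := by
      intro j; rw [Finset.sum_div]; exact Finset.sum_congr rfl fun i _ => by ring
    have hkey : Real.sqrt (∑ j, (∑ i, (v i / n) * N i j) ^ 2)
        = Real.sqrt (∑ j, (∑ i, v i * N i j) ^ 2) / n := by
      simp_rw [h1, div_pow]
      rw [← Finset.sum_div, Real.sqrt_div (by positivity), Real.sqrt_sq hpos.le]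
    rw [hkey] at hS
    exact (le_div_iff₀ hpos).mp hS

lemma key_ineq (A B c d : ℝ) (hA : 0 ≤ A) (hB : 0 ≤ B) (hc : 0 ≤ c) (hd : 0 ≤ d) :
    (A * c) ^ 2 + (B * c + A * d) ^ 2 ≤ (A ^ 2 + B ^ 2) * (c + d) ^ 2 := by
  nlinarith [mul_nonneg (mul_nonneg hc hd) (sq_nonneg (A - B)),
    mul_nonneg (mul_nonneg (mul_nonneg hA hB) hc) hd,
    mul_nonneg (sq_nonneg B) (sq_nonneg d)]

/-- Minimal singular value of a block upper-triangular matrix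
`M = [[a, zᵀ],[0, D]] ∈ ℝ^{q×(p+1)}` (with `q−1 ≤ p`, here `q = e+1`):
`σ_q(M) ≥ min{|a|, σ_{q−1}(D)} / (1 + ‖z‖₂/|a|)`. Since `q` (resp. `q−1`) equals the number
of rows of `M` (resp. `D`) and is at most the number of columns, `σ_q(M)` and `σ_{q−1}(D)`
are the smallest singular values of `M` and `D`. -/
theorem block_upper_triangular_min_singular_value
    (e p : ℕ) (hep : e ≤ p)
    (a : ℝ) (ha : a ≠ 0) (z : Fin p → ℝ) (D : Matrix (Fin e) (Fin p) ℝ)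
    (M : Matrix (Unit ⊕ Fin e) (Unit ⊕ Fin p) ℝ)
    (hM : M = Matrix.fromBlocks (Matrix.of fun _ _ => a) (Matrix.of fun _ j => z j) 0 D) :
    min |a| (minSingularValue D) / (1 + Real.sqrt (∑ j, (z j) ^ 2) / |a|) ≤
      minSingularValue M := by
  subst hM
  set σ := minSingularValue D with hσ
  set nz := Real.sqrt (∑ j, (z j) ^ 2) with hnz
  have ha' : 0 < |a| := abs_pos.mpr ha
  have hnz0 : 0 ≤ nz := Real.sqrt_nonneg _
  have h1γ : 0 < 1 + nz / |a| := by positivity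
  set m := min |a| σ with hm
  have hm0 : 0 ≤ m := le_min ha'.le (minSV_nonneg D)
  have hma : m ≤ |a| := min_le_left _ _
  have hmσ : m ≤ σ := min_le_right _ _
  unfold minSingularValue
  apply le_csInf
  · refine ⟨_, Sum.elim (fun _ => (1:ℝ)) (fun _ => 0), ?_, rfl⟩
    simp [Fintype.sum_sum_type]
  · rintro b ⟨u, hu, rfl⟩
    dsimp only
    rw [div_le_iff₀ h1γ]
    set t := u (Sum.inl ()) with ht
    set v := fun i => u (Sum.inr i) with hv
    have hexpr : ∑ j : Unit ⊕ Fin p,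
        (∑ i : Unit ⊕ Fin e, u i *
          Matrix.fromBlocks (Matrix.of fun _ _ => a) (Matrix.of fun _ j => z j) 0 D i j) ^ 2
        = (t * a) ^ 2 + ∑ j, (t * z j + ∑ i, v i * D i j) ^ 2 := by
      rw [Fintype.sum_sum_type]
      simp [Fintype.sum_sum_type]
      rfl
    rw [hexpr]
    have huu : t ^ 2 + ∑ i, v i ^ 2 = 1 := by
      have := hu
      simp only [Set.mem_setOf_eq, Fintype.sum_sum_type] at this
      simpa using this
    set ν := Real.sqrt (∑ i, v i ^ 2) with hν
    have hν0 : 0 ≤ ν := Real.sqrt_nonneg _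
    have hν2 : ν ^ 2 = ∑ i, v i ^ 2 := Real.sq_sqrt (by positivity)
    have huu' : t ^ 2 + ν ^ 2 = 1 := by rw [hν2]; exact huu
    set s₂ := Real.sqrt (∑ j, (t * z j + ∑ i, v i * D i j) ^ 2) with hs₂
    have hs₂0 : 0 ≤ s₂ := Real.sqrt_nonneg _
    have hs₂2 : s₂ ^ 2 = ∑ j, (t * z j + ∑ i, v i * D i j) ^ 2 :=
      Real.sq_sqrt (by positivity)
    have htz : Real.sqrt (∑ j, (t * z j) ^ 2) = |t| * nz := by
      have h : ∀ j, (t * z j) ^ 2 = t ^ 2 * z j ^ 2 := fun j => by ring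
      simp_rw [h, ← Finset.mul_sum]
      rw [Real.sqrt_mul (sq_nonneg t), Real.sqrt_sq_eq_abs, hnz]
    have htri : Real.sqrt (∑ j, (∑ i, v i * D i j) ^ 2) ≤ s₂ + |t| * nz := by
      have h1 : ∀ j, (∑ i, v i * D i j)
          = (t * z j + ∑ i, v i * D i j) + (- (t * z j)) := fun j => by ring
      have h2 : Real.sqrt (∑ j, (- (t * z j)) ^ 2) = |t| * nz := by
        simp_rw [neg_sq]; exact htz
      calc Real.sqrt (∑ j, (∑ i, v i * D i j) ^ 2)
          = Real.sqrt (∑ j, ((t * z j + ∑ i, v i * D i j) + (- (t * z j))) ^ 2) := by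
            simp_rw [← h1]
        _ ≤ s₂ + Real.sqrt (∑ j, (- (t * z j)) ^ 2) := sqrt_triangle _ _
        _ = s₂ + |t| * nz := by rw [h2]
    have hσν : σ * ν ≤ s₂ + |t| * nz := le_trans (minSV_le_apply D v) htri
    set S := Real.sqrt ((t * a) ^ 2 + ∑ j, (t * z j + ∑ i, v i * D i j) ^ 2) with hS
    have hS0 : 0 ≤ S := Real.sqrt_nonneg _
    have hS2 : S ^ 2 = (t * a) ^ 2 + s₂ ^ 2 := by
      rw [hs₂2]; exact Real.sq_sqrt (by positivity)
    have ht0 : 0 ≤ |t| := abs_nonneg t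
    have hta2 : (t * a) ^ 2 = (|t| * |a|) ^ 2 := by rw [← abs_mul, sq_abs]
    have hmain : (m * |a|) ^ 2 ≤ (S * (|a| + nz)) ^ 2 := by
      have h2 : m * ν ≤ s₂ + |t| * nz :=
        le_trans (mul_le_mul_of_nonneg_right hmσ hν0) hσν
      have e1 : m * |t| ≤ |t| * |a| := by
        rw [mul_comm m]; exact mul_le_mul_of_nonneg_left hma ht0
      have e2 : m * ν * |a| ≤ s₂ * |a| + |t| * |a| * nz := by
        have := mul_le_mul_of_nonneg_right h2 ha'.le
        nlinarith [this]
      have q1 : (m * |t| * |a|) ^ 2 ≤ (|t| * |a| * |a|) ^ 2 :=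
        pow_le_pow_left₀ (by positivity) (mul_le_mul_of_nonneg_right e1 ha'.le) 2
      have q2 : (m * ν * |a|) ^ 2 ≤ (s₂ * |a| + |t| * |a| * nz) ^ 2 :=
        pow_le_pow_left₀ (by positivity) e2 2
      have habs : |t| ^ 2 = t ^ 2 := sq_abs t
      have h7 : (m * |a|) ^ 2 = (m * |t| * |a|) ^ 2 + (m * ν * |a|) ^ 2 := by
        linear_combination (-(m ^ 2 * |a| ^ 2)) * huu' + (-(m ^ 2 * |a| ^ 2)) * habs
      have hk : (|t| * |a| * |a|) ^ 2 + (s₂ * |a| + |t| * |a| * nz) ^ 2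
          ≤ ((|t| * |a|) ^ 2 + s₂ ^ 2) * (|a| + nz) ^ 2 :=
        key_ineq (|t| * |a|) s₂ |a| nz (by positivity) hs₂0 ha'.le hnz0
      have h6 : (S * (|a| + nz)) ^ 2 = ((|t| * |a|) ^ 2 + s₂ ^ 2) * (|a| + nz) ^ 2 := by
        rw [mul_pow, hS2, hta2]
      linarith [h7, q1, q2, hk, h6.ge, h6.le]
    have hfin : m * |a| ≤ S * (|a| + nz) :=
      (pow_le_pow_iff_left₀ (by positivity) (by positivity) two_ne_zero).mp hmain
    have heq : S * (1 + nz / |a|) = S * (|a| + nz) / |a| := by field_simp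
    rw [heq, le_div_iff₀ ha']
    exact hfin
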